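/- Let (Q,I) be a triangular special biserial bound quiver, x a source of Q, P_x the indecomposable projective A-module at x where A = kQ/I. Then the number t(x) of equivalence classes of the relation on arrows starting at x generated by 'α ≈ β whenever α and β are the initial arrows of the two paths of a binomial relation starting at x' equals 1 if P_x is injective and 2 if x is the source of two arrows and P_x is not injective. -/

import Mathlib

open Classical

noncomputable section

/-- A finite quiver: finite sets of vertices and arrows with source and target maps. -/
structure FQuiver where
  V : Type
  A : Type
  [fintV : Fintype V]
  [decV : DecidableEq V]
  [fintA : Fintype A]
  [decA : DecidableEq A]
  src : A → V
  tgt : A → V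

attribute [instance] FQuiver.fintV FQuiver.decV FQuiver.fintA FQuiver.decA

namespace FQuiver

variable {Q : FQuiver}

/-- Oriented paths in a quiver. -/
inductive Path (Q : FQuiver) : Q.V → Q.V → Type
  | nil (v : Q.V) : Path Q v v
  | cons (a : Q.A) {w : Q.V} (p : Path Q (Q.tgt a) w) : Path Q (Q.src a) w

/-- Composition (concatenation) of paths. -/
def Path.comp : ∀ {u v w : Q.V}, Path Q u v → Path Q v w → Path Q u w
  | _, _, _, .nil _, q => q
  | _, _, _, .cons a p, q => .cons a (Path.comp p q)

/-- Length of a path. -/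
def Path.length : ∀ {u v : Q.V}, Path Q u v → ℕ
  | _, _, .nil _ => 0
  | _, _, .cons _ p => Path.length p + 1

/-- The list of arrows of a path, in order. -/
def Path.arrows : ∀ {u v : Q.V}, Path Q u v → List Q.A
  | _, _, .nil _ => []
  | _, _, .cons a p => a :: Path.arrows p

/-- An arrow regarded as a path of length one. -/
def arrow (Q : FQuiver) (a : Q.A) : Path Q (Q.src a) (Q.tgt a) := .cons a (.nil _)

/-- Power of an oriented cycle. -/
def Path.pow {x : Q.V} (c : Path Q x x) : ℕ → Path Q x x
  | 0 => .nil x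
  | n + 1 => c.comp (Path.pow c n)

/-- Transport a path along equalities of its endpoints. -/
def Path.cast {u u' v v' : Q.V} (hu : u = u') (hv : v = v') (p : Path Q u v) :
    Path Q u' v' := by subst hu; subst hv; exact p

/-- The length-two path `ab` formed by two composable arrows. -/
def comp2 (a b : Q.A) (h : Q.src b = Q.tgt a) : Path Q (Q.src a) (Q.tgt b) :=
  (arrow Q a).comp ((arrow Q b).cast h rfl)

/-- The set of all paths of a quiver, bundled with their endpoints. -/
def PathsSigma (Q : FQuiver) : Type := Σ (u : Q.V) (v : Q.V), Path Q u v

/-- The underlying vector space of the path algebra `kQ`: the free `k`-module on paths. -/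
abbrev PAlg (k : Type) [Field k] (Q : FQuiver) : Type := PathsSigma Q →₀ k

/-- The basis vector of `kQ` corresponding to a path. -/
def pvec (k : Type) [Field k] {u v : Q.V} (p : Path Q u v) : PAlg k Q :=
  Finsupp.single ⟨u, v, p⟩ 1

/-- Left multiplication of an element of `kQ` by a path. -/
def lmul (k : Type) [Field k] {u v : Q.V} (p : Path Q u v) (x : PAlg k Q) : PAlg k Q :=
  x.sum fun s c => if h : s.1 = v then c • pvec k (p.comp ((Sigma.snd (Sigma.snd s)).cast h rfl)) else 0

/-- Right multiplication of an element of `kQ` by a path. -/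
def rmul (k : Type) [Field k] {u v : Q.V} (x : PAlg k Q) (p : Path Q u v) : PAlg k Q :=
  x.sum fun s c => if h : s.2.1 = u then c • pvec k (Path.comp ((Sigma.snd (Sigma.snd s)).cast rfl h) p) else 0

/-- The two-sided ideal of `kQ` generated by a set of elements. -/
def idealGen (k : Type) [Field k] (Q : FQuiver) (s : Set (PAlg k Q)) : Submodule k (PAlg k Q) :=
  sInf {M : Submodule k (PAlg k Q) |
    s ⊆ (M : Set (PAlg k Q)) ∧
    ∀ (u v : Q.V) (p : Path Q u v) (x : PAlg k Q), x ∈ M → lmul k p x ∈ M ∧ rmul k x p ∈ M}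

/-- An admissible (two-sided) ideal `(kQ⁺)ᵐ ⊆ I ⊆ (kQ⁺)²` of the path algebra. -/
structure AdmissibleIdeal (k : Type) [Field k] (Q : FQuiver) where
  I : Submodule k (PAlg k Q)
  lmul_mem : ∀ {u v : Q.V} (p : Path Q u v) {x : PAlg k Q}, x ∈ I → lmul k p x ∈ I
  rmul_mem : ∀ {u v : Q.V} (p : Path Q u v) {x : PAlg k Q}, x ∈ I → rmul k x p ∈ I
  bound : ℕ
  two_le_bound : 2 ≤ bound
  pow_le : ∀ {u v : Q.V} (p : Path Q u v), bound ≤ p.length → pvec k p ∈ I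
  le_sq : ∀ x ∈ I, ∀ s ∈ x.support, 2 ≤ (Sigma.snd (Sigma.snd s)).length

/-- A special biserial bound quiver `(Q, I)`. -/
structure SpecialBiserial (k : Type) [Field k] (Q : FQuiver) extends AdmissibleIdeal k Q where
  src_card : ∀ v : Q.V, Fintype.card {a : Q.A // Q.src a = v} ≤ 2
  tgt_card : ∀ v : Q.V, Fintype.card {a : Q.A // Q.tgt a = v} ≤ 2
  unique_succ : ∀ (a b c : Q.A) (hb : Q.src b = Q.tgt a) (hc : Q.src c = Q.tgt a),
      pvec k (comp2 a b hb) ∉ I → pvec k (comp2 a c hc) ∉ I → b = c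
  unique_pred : ∀ (a b c : Q.A) (hb : Q.tgt b = Q.src a) (hc : Q.tgt c = Q.src a),
      pvec k (comp2 b a hb.symm) ∉ I → pvec k (comp2 c a hc.symm) ∉ I → b = c

/-- A binomial relation `u - λv ∈ I` between distinct parallel paths not in `I`. -/
structure BinRel {k : Type} [Field k] {Q : FQuiver} (J : AdmissibleIdeal k Q) where
  s : Q.V
  t : Q.V
  u : Path Q s t
  v : Path Q s t
  coef : k
  coef_ne : coef ≠ 0
  u_ne_v : u ≠ v
  u_not_mem : pvec k u ∉ J.I
  v_not_mem : pvec k v ∉ J.I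
  rel_mem : pvec k u - coef • pvec k v ∈ J.I

/-- `I` is generated by a set of paths (monomial relations) together with the
binomial relations in `R`. -/
def Generates {k : Type} [Field k] {Q : FQuiver} (J : AdmissibleIdeal k Q)
    (R : Set (BinRel J)) : Prop :=
  ∃ P : Set (PathsSigma Q),
    (∀ s ∈ P, pvec k (Sigma.snd (Sigma.snd s)) ∈ J.I) ∧
    J.I = idealGen k Q
      (((fun s : PathsSigma Q => pvec k (Sigma.snd (Sigma.snd s))) '' P) ∪
       ((fun r : BinRel J => pvec k r.u - r.coef • pvec k r.v) '' R))

/-- The ideal `S ⊆ A = kQ/I`: the span of the residue classes of the paths occurring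
in the binomial relations of `R`. -/
def Smod {k : Type} [Field k] {Q : FQuiver} (J : AdmissibleIdeal k Q) (R : Set (BinRel J)) :
    Submodule k (PAlg k Q ⧸ J.I) :=
  Submodule.span k
    ((fun r : BinRel J => (Submodule.Quotient.mk (pvec k r.u) : PAlg k Q ⧸ J.I)) '' R)

/-- Number of connected components of the underlying graph of `Q`. -/
def numComponents (Q : FQuiver) : ℕ :=
  Nat.card (Quot (fun u v : Q.V => ∃ a : Q.A, Q.src a = u ∧ Q.tgt a = v))

/-- A quiver is acyclic (triangular) if it has no nontrivial oriented cycle. -/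
def Acyclic (Q : FQuiver) : Prop := ∀ (x : Q.V) (p : Path Q x x), p.length = 0

/-- A simple cycle: a nontrivial oriented cycle visiting no vertex twice. -/
def IsSimpleCycle {x : Q.V} (p : Path Q x x) : Prop :=
  p.length ≠ 0 ∧ (p.arrows.map Q.src).Nodup

/-- `dim_k S = χ(Q)`, written additively: `dim S + |Q₀| = |Q₁| + N`. -/
def EulerEq {k : Type} [Field k] {Q : FQuiver} (J : AdmissibleIdeal k Q)
    (R : Set (BinRel J)) : Prop :=
  Module.finrank k ↥(Smod J R) + Fintype.card Q.V = Fintype.card Q.A + numComponents Q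

/-- The word in the free group on the arrows determined by a path. -/
def pathWord (Q : FQuiver) {u v : Q.V} (p : Path Q u v) : FreeGroup Q.A :=
  (p.arrows.map FreeGroup.of).prod

/-- `T` is a spanning tree of (the underlying graph of) `Q`. -/
def IsSpanningTree (Q : FQuiver) (T : Set Q.A) : Prop :=
  (∀ u v : Q.V,
      Quot.mk (fun a b : Q.V => ∃ e ∈ T, Q.src e = a ∧ Q.tgt e = b) u =
      Quot.mk (fun a b : Q.V => ∃ e ∈ T, Q.src e = a ∧ Q.tgt e = b) v) ∧
  Nat.card T + 1 = Fintype.card Q.V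

/-- The fundamental group of the bound quiver `(Q, I)` (for connected `Q`,
with respect to a spanning tree `T`): the free group on the arrows modulo the
tree arrows and the homotopy relations coming from the binomial relations. -/
abbrev pi1 {k : Type} [Field k] {Q : FQuiver} (J : AdmissibleIdeal k Q)
    (T : Set Q.A) (R : Set (BinRel J)) : Type :=
  FreeGroup Q.A ⧸ Subgroup.normalClosure
    ((FreeGroup.of '' T) ∪
     ((fun r : BinRel J => pathWord Q r.u * (pathWord Q r.v)⁻¹) '' R))

end FQuiver


namespace FQuiver

/-- There is a binomial relation in `I` starting at `x` whose two paths begin with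
the arrows `al` and `be` respectively. -/
def relLinks {k : Type} [Field k] {Q : FQuiver} (J : AdmissibleIdeal k Q)
    (x : Q.V) (al be : Q.A) : Prop :=
  ∃ (y : Q.V) (u v : Path Q x y) (c : k), c ≠ 0 ∧ u ≠ v ∧
    pvec k u ∉ J.I ∧ pvec k v ∉ J.I ∧ pvec k u - c • pvec k v ∈ J.I ∧
    u.arrows.head? = some al ∧ v.arrows.head? = some be

/-- The number `t(x)` of classes of the equivalence relation on the arrows starting
at `x` generated by "being the initial arrows of the two paths of a binomial
relation starting at `x`". -/
def tClasses {k : Type} [Field k] {Q : FQuiver} (J : AdmissibleIdeal k Q)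
    (x : Q.V) : ℕ :=
  Nat.card (Quot fun al be : {a : Q.A // Q.src a = x} => relLinks J x (↑al) (↑be))

/-- `x` is the source of a binomial relation; for special biserial algebras this is
equivalent to the indecomposable projective `P_x` being injective. -/
def sourceOfBinomial {k : Type} [Field k] {Q : FQuiver} (J : AdmissibleIdeal k Q)
    (x : Q.V) : Prop :=
  ∃ (y : Q.V) (u v : Path Q x y) (c : k), c ≠ 0 ∧ u ≠ v ∧
    pvec k u ∉ J.I ∧ pvec k v ∉ J.I ∧ pvec k u - c • pvec k v ∈ J.I

section Aux

variable {k : Type} [Field k] {Q : FQuiver}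

theorem Path.cast_rfl {u v : Q.V} (p : Path Q u v) : p.cast rfl rfl = p := rfl

theorem lmul_pvec {u v w : Q.V} (p : Path Q u v) (q : Path Q v w) :
    lmul k p (pvec k q) = pvec k (p.comp q) := by
  rw [lmul, pvec]; erw [Finsupp.sum_single_index]
  · rw [dif_pos rfl, one_smul]; rfl
  · rw [dif_pos rfl, zero_smul]

theorem rmul_pvec {u v w : Q.V} (p : Path Q u v) (q : Path Q v w) :
    rmul k (pvec k p) q = pvec k (p.comp q) := by
  rw [rmul, pvec]; erw [Finsupp.sum_single_index]
  · rw [dif_pos rfl, one_smul]; rfl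
  · rw [dif_pos rfl, zero_smul]

theorem pvec_cons_mem {J : AdmissibleIdeal k Q} {a : Q.A} {y : Q.V}
    {p : Path Q (Q.tgt a) y} (h : pvec k p ∈ J.I) :
    pvec k (Path.cons a p) ∈ J.I := by
  have := J.lmul_mem (arrow Q a) h
  rwa [lmul_pvec] at this

theorem pvec_comp_mem {J : AdmissibleIdeal k Q} {u v w : Q.V} {p : Path Q u v}
    (q : Path Q v w) (h : pvec k p ∈ J.I) : pvec k (p.comp q) ∈ J.I := by
  have := J.rmul_mem q h
  rwa [rmul_pvec] at this

theorem length_zero_cases : ∀ {x y : Q.V} (p : Path Q x y), p.length = 0 → x = y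
  | _, _, .nil _, _ => rfl
  | _, _, .cons _ _, h => by simp [Path.length] at h

theorem head_none : ∀ {x y : Q.V} (p : Path Q x y),
    p.arrows.head? = none → p.length = 0
  | _, _, .nil _, _ => rfl
  | _, _, .cons _ _, h => by simp [Path.arrows] at h

theorem head_of_length_zero : ∀ {x y : Q.V} (p : Path Q x y),
    p.length = 0 → p.arrows.head? = none
  | _, _, .nil _, _ => rfl
  | _, _, .cons _ _, h => by simp [Path.length] at h

theorem length_pos_of_head_some : ∀ {x y : Q.V} (p : Path Q x y) {b : Q.A},
    p.arrows.head? = some b → p.length ≠ 0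
  | _, _, .nil _, _, h => by simp [Path.arrows] at h
  | _, _, .cons _ _, _, _ => by simp [Path.length]

theorem src_of_head : ∀ {x y : Q.V} (p : Path Q x y) {b : Q.A},
    p.arrows.head? = some b → Q.src b = x
  | _, _, .nil _, _, h => by simp [Path.arrows] at h
  | _, _, .cons a p, b, h => by
    simp only [Path.arrows, List.head?_cons, Option.some.injEq] at h
    subst h; rfl

theorem exists_cons : ∀ {x y : Q.V} (p : Path Q x y) {b : Q.A},
    p.arrows.head? = some b →
    ∃ (hb : Q.src b = x) (p' : Path Q (Q.tgt b) y), p = (Path.cons b p').cast hb rfl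
  | _, _, .nil _, _, h => by simp [Path.arrows] at h
  | _, _, .cons a p, b, h => by
    simp only [Path.arrows, List.head?_cons, Option.some.injEq] at h
    subst h
    exact ⟨rfl, p, rfl⟩

theorem len_zero_of_eq (hacyc : Acyclic Q) {x y : Q.V} (p : Path Q x y)
    (e : x = y) : p.length = 0 := by subst e; exact hacyc x p

theorem eq_nil_aux : ∀ {x y : Q.V} (p : Path Q x y), p.length = 0 →
    ∀ (e : x = y), p = (Path.nil x).cast rfl e
  | _, _, .nil _, _, _ => rfl
  | _, _, .cons _ _, h, _ => by simp [Path.length] at h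

theorem path_self_eq_nil (hacyc : Acyclic Q) {x : Q.V} (p : Path Q x x) :
    p = Path.nil x :=
  eq_nil_aux p (hacyc x p) rfl

theorem cast_cons_comp {β : Q.A} {w y : Q.V} (h : Q.src β = w)
    (p : Path Q (Q.tgt β) y) :
    (Path.cons β p).cast h rfl = ((arrow Q β).cast h rfl).comp p := by
  subst h; rfl

theorem key (SB : SpecialBiserial k Q) (hacyc : Acyclic Q) :
    ∀ {x y : Q.V} (u v : Path Q x y),
      pvec k u ∉ SB.I → pvec k v ∉ SB.I →
      u.arrows.head? = v.arrows.head? → u = v := by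
  intro x y u
  induction u with
  | nil w => intro v _ _ _; exact (path_self_eq_nil hacyc v).symm
  | cons a p ih =>
    intro v hu hv hhead
    obtain ⟨hb, v', rfl⟩ := exists_cons v hhead.symm
    have hp : pvec k p ∉ SB.I := fun h => hu (pvec_cons_mem h)
    have hv'mem : pvec k v' ∉ SB.I := fun h => hv (pvec_cons_mem (a := a) h)
    suffices hpv : p = v' by exact congrArg (fun q => Path.cons a q) hpv
    apply ih v' hp hv'mem
    rcases h1 : p.arrows.head? with _ | β
    · rcases h2 : v'.arrows.head? with _ | γ
      · rfl
      · exfalso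
        have e := length_zero_cases p (head_none p h1)
        exact length_pos_of_head_some v' h2 (len_zero_of_eq hacyc v' e)
    · rcases h2 : v'.arrows.head? with _ | γ
      · exfalso
        have e := length_zero_cases v' (head_none v' h2)
        exact length_pos_of_head_some p h1 (len_zero_of_eq hacyc p e)
      · obtain ⟨hβ, p'', rfl⟩ := exists_cons p h1
        obtain ⟨hγ, q'', rfl⟩ := exists_cons v' h2
        rw [cast_cons_comp hβ p''] at hu
        rw [cast_cons_comp hγ q''] at hv
        have hcβ : pvec k (comp2 a β hβ) ∉ SB.I := fun h =>
          hu (pvec_comp_mem p'' h)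
        have hcγ : pvec k (comp2 a γ hγ) ∉ SB.I := fun h =>
          hv (pvec_comp_mem q'' h)
        have := SB.unique_succ a β γ hβ hγ hcβ hcγ
        subst this
        rfl

theorem heads_differ (SB : SpecialBiserial k Q) (hacyc : Acyclic Q)
    {x y : Q.V} (u v : Path Q x y) (hne : u ≠ v)
    (hu : pvec k u ∉ SB.I) (hv : pvec k v ∉ SB.I) :
    ∃ a b : Q.A, Q.src a = x ∧ Q.src b = x ∧
      u.arrows.head? = some a ∧ v.arrows.head? = some b ∧ a ≠ b := by
  rcases h1 : u.arrows.head? with _ | a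
  · exfalso
    have e := length_zero_cases u (head_none u h1)
    have h2 : v.arrows.head? = none := head_of_length_zero v (len_zero_of_eq hacyc v e)
    exact hne (key SB hacyc u v hu hv (h1.trans h2.symm))
  · rcases h2 : v.arrows.head? with _ | b
    · exfalso
      have e := length_zero_cases v (head_none v h2)
      exact length_pos_of_head_some u h1 (len_zero_of_eq hacyc u e)
    · refine ⟨a, b, src_of_head u h1, src_of_head v h2, rfl, rfl, fun e => hne ?_⟩
      exact key SB hacyc u v hu hv (by rw [h1, h2, e])

end Aux

/-- for a source `x` of a triangular special biserial bound quiver,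
`t(x) = 1` if `P_x` is injective (equivalently, `x` is the source of a binomial
relation), and `t(x) = 2` if `x` is the source of two arrows and `P_x` is not
injective. -/
theorem stmt14 {k : Type} [Field k] {Q : FQuiver} (SB : SpecialBiserial k Q)
    (hacyc : Acyclic Q) (x : Q.V) (hsource : ∀ a : Q.A, Q.tgt a ≠ x) :
    (sourceOfBinomial SB.toAdmissibleIdeal x → tClasses SB.toAdmissibleIdeal x = 1) ∧
    ((Fintype.card {a : Q.A // Q.src a = x} = 2 ∧
        ¬ sourceOfBinomial SB.toAdmissibleIdeal x) →
      tClasses SB.toAdmissibleIdeal x = 2) := by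
  set T := {a : Q.A // Q.src a = x} with hT
  set r := fun al be : T => relLinks SB.toAdmissibleIdeal x (↑al) (↑be) with hr
  constructor
  · rintro ⟨y, u, v, c, hc, huv, hu, hv, hrel⟩
    obtain ⟨a, b, ha, hb, h1, h2, hab⟩ := heads_differ SB hacyc u v huv hu hv
    have hlink : r ⟨a, ha⟩ ⟨b, hb⟩ := ⟨y, u, v, c, hc, huv, hu, hv, hrel, h1, h2⟩
    have hAB : (Quot.mk r ⟨a, ha⟩ : Quot r) = Quot.mk r ⟨b, hb⟩ := Quot.sound hlink
    have hall : ∀ e : T, e = ⟨a, ha⟩ ∨ e = ⟨b, hb⟩ := by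
      intro e
      by_contra hcon
      push_neg at hcon
      have hAB' : (⟨a, ha⟩ : T) ≠ ⟨b, hb⟩ := fun h => hab (congrArg Subtype.val h)
      have hle := Finset.card_le_univ ({e, ⟨a, ha⟩, ⟨b, hb⟩} : Finset T)
      rw [Finset.card_insert_of_notMem (by simp [hcon.1, hcon.2]),
        Finset.card_insert_of_notMem (by simp [hAB']), Finset.card_singleton] at hle
      have h2c : Fintype.card T ≤ 2 := SB.src_card x
      omega
    have hsub : ∀ q1 q2 : Quot r, q1 = q2 := by
      intro q1 q2
      induction q1 using Quot.ind with | _ e1 =>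
      induction q2 using Quot.ind with | _ e2 =>
      rcases hall e1 with rfl | rfl <;> rcases hall e2 with rfl | rfl
      · rfl
      · exact hAB
      · exact hAB.symm
      · rfl
    rw [tClasses]
    exact Nat.card_eq_one_iff_unique.mpr ⟨⟨hsub⟩, ⟨Quot.mk r ⟨a, ha⟩⟩⟩
  · rintro ⟨hcard, hnsob⟩
    have hempty : ∀ a b : T, ¬ r a b := by
      rintro a b ⟨y, u, v, c, hc, huv, hu, hv, hrel, -, -⟩
      exact hnsob ⟨y, u, v, c, hc, huv, hu, hv, hrel⟩
    have hbij : Function.Bijective (Quot.mk r) := by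
      constructor
      · intro a b h
        exact congrArg (Quot.lift (id : T → T) (fun a b hr' => absurd hr' (hempty a b))) h
      · exact fun q => Quot.exists_rep q
    rw [tClasses, ← Nat.card_congr (Equiv.ofBijective _ hbij),
      Nat.card_eq_fintype_card, hcard]

end FQuiver
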